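/- arXiv:1704.08156 — 4 statements merged into one kernel-verified Lean document; each statement's English description precedes it below -/
import Mathlib

section
/- Let T be an invertible linear map on ℝ^{d+m−1} such that T(M) = M, where M = ℤ^d × (E−E). Write T in block form T = [[U, V],[X, W]] with U a d×d block. Then X = 0, U ∈ GL_d(ℤ), and W permutes the set E−E in the sense that W restricted to E−E is a bijection of E−E onto itself. -/
open Matrix

/-- The set `E ⊂ ℤ^{m-1}`: the zero vector together with the standard basis. -/
def Eset (m : ℕ) : Set (Fin (m - 1) → ℤ) :=
  insert 0 {v | ∃ i, v = Pi.single i 1}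

/-- `E − E` as a set of real vectors. -/
def EmEℝ (m : ℕ) : Set (Fin (m - 1) → ℝ) :=
  {x | ∃ a ∈ Eset m, ∃ b ∈ Eset m, x = fun j => ((a j : ℝ) - (b j : ℝ))}

/-- `M = ℤ^d × (E−E)` as a set of real vectors in `ℝ^{d+m-1}`. -/
def MsetR (d m : ℕ) : Set (Fin d ⊕ Fin (m - 1) → ℝ) :=
  {k | (∀ i, ∃ z : ℤ, k (Sum.inl i) = (z : ℝ)) ∧ (fun j => k (Sum.inr j)) ∈ EmEℝ m}

lemma Eset_cases {m : ℕ} {a : Fin (m-1) → ℤ} (ha : a ∈ Eset m) (j : Fin (m-1)) :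
    a j = 0 ∨ a j = 1 := by
  rcases ha with rfl | ⟨i, rfl⟩
  · left; rfl
  · rw [Pi.single_apply]; split <;> simp

lemma zero_mem_EmE (m : ℕ) : (0 : Fin (m-1) → ℝ) ∈ EmEℝ m :=
  ⟨0, Set.mem_insert _ _, 0, Set.mem_insert _ _, by funext j; simp⟩

lemma abs_le_one_of_mem_EmE {m : ℕ} {x : Fin (m-1) → ℝ} (hx : x ∈ EmEℝ m)
    (j : Fin (m-1)) : |x j| ≤ 1 := by
  obtain ⟨a, ha, b, hb, rfl⟩ := hx
  rcases Eset_cases ha j with h1 | h1 <;> rcases Eset_cases hb j with h2 | h2 <;>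
    simp [h1, h2]

lemma elim_mem_MsetR {d m : ℕ} (z : Fin d → ℤ) {v : Fin (m-1) → ℝ}
    (hv : v ∈ EmEℝ m) :
    (Sum.elim (fun i => (z i : ℝ)) v) ∈ MsetR d m :=
  ⟨fun i => ⟨z i, rfl⟩, hv⟩

lemma EmE_finite (m : ℕ) : (EmEℝ m).Finite := by
  have hE : (Eset m).Finite :=
    Set.Finite.subset ((Set.finite_range (fun i : Fin (m-1) => Pi.single i (1:ℤ))).insert 0)
      (by intro v hv; rcases hv with rfl | ⟨i, rfl⟩
          · exact Set.mem_insert _ _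
          · exact Set.mem_insert_of_mem _ ⟨i, rfl⟩)
  apply Set.Finite.subset (Set.Finite.image2
    (fun a b => fun j => ((a j : ℝ) - (b j : ℝ))) hE hE)
  rintro x ⟨a, ha, b, hb, rfl⟩
  exact Set.mem_image2_of_mem ha hb

lemma mulVec_elim_inl {d m : ℕ} (T : Matrix (Fin d ⊕ Fin (m - 1)) (Fin d ⊕ Fin (m - 1)) ℝ)
    (z : Fin d → ℝ) (v : Fin (m-1) → ℝ) (i : Fin d) :
    T.mulVec (Sum.elim z v) (Sum.inl i)
      = (∑ l, T (Sum.inl i) (Sum.inl l) * z l) + ∑ l, T (Sum.inl i) (Sum.inr l) * v l := by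
  simp [Matrix.mulVec, dotProduct, Fintype.sum_sum_type]

lemma mulVec_elim_inr {d m : ℕ} (T : Matrix (Fin d ⊕ Fin (m - 1)) (Fin d ⊕ Fin (m - 1)) ℝ)
    (z : Fin d → ℝ) (v : Fin (m-1) → ℝ) (i : Fin (m-1)) :
    T.mulVec (Sum.elim z v) (Sum.inr i)
      = (∑ l, T (Sum.inr i) (Sum.inl l) * z l) + ∑ l, T (Sum.inr i) (Sum.inr l) * v l := by
  simp [Matrix.mulVec, dotProduct, Fintype.sum_sum_type]


/-- a linear automorphism `T` of `ℝ^{d+m-1}` with `T(M) = M` has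
block form `[[U, V],[0, W]]` with `U ∈ GL_d(ℤ)` and `W` permuting `E−E`. -/
theorem stmt_3 (d m : ℕ) (T : Matrix (Fin d ⊕ Fin (m - 1)) (Fin d ⊕ Fin (m - 1)) ℝ)
    (hinv : IsUnit T.det)
    (hM : (fun k => T.mulVec k) '' MsetR d m = MsetR d m) :
    (∀ i j, T (Sum.inr i) (Sum.inl j) = 0) ∧
    (∃ U : Matrix (Fin d) (Fin d) ℤ, IsUnit U.det ∧
      ∀ i j, T (Sum.inl i) (Sum.inl j) = (U i j : ℝ)) ∧
    Set.BijOn (fun x => (Matrix.of fun i j => T (Sum.inr i) (Sum.inr j)).mulVec x)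
      (EmEℝ m) (EmEℝ m) := by
  have hfwd : ∀ k ∈ MsetR d m, T.mulVec k ∈ MsetR d m := by
    intro k hk
    rw [← hM]; exact ⟨k, hk, rfl⟩
  have hbwd : ∀ u ∈ MsetR d m, ∃ k ∈ MsetR d m, T.mulVec k = u := by
    intro u hu
    rw [← hM] at hu; obtain ⟨k, hk, hku⟩ := hu; exact ⟨k, hk, hku⟩
  -- Step 1: lower-left block is zero
  have hX : ∀ i j, T (Sum.inr i) (Sum.inl j) = 0 := by
    intro i j
    by_contra hc
    have hpos : 0 < |T (Sum.inr i) (Sum.inl j)| := abs_pos.mpr hc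
    obtain ⟨n, hn⟩ := exists_nat_gt (1 / |T (Sum.inr i) (Sum.inl j)|)
    have hmem := hfwd _ (elim_mem_MsetR (Pi.single j (n : ℤ)) (zero_mem_EmE m))
    have hb := abs_le_one_of_mem_EmE hmem.2 i
    have hval : T.mulVec (Sum.elim (fun l => (((Pi.single j (n:ℤ) : Fin d → ℤ) l) : ℝ)) 0) (Sum.inr i)
        = n * T (Sum.inr i) (Sum.inl j) := by
      rw [mulVec_elim_inr]
      simp [Pi.single_apply, mul_comm]
    rw [hval] at hb
    have h1 : (1:ℝ) < n * |T (Sum.inr i) (Sum.inl j)| := (div_lt_iff₀ hpos).mp hn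
    rw [abs_mul, Nat.abs_cast] at hb
    linarith
  -- decomposition lemma
  have hkelim : ∀ k : Fin d ⊕ Fin (m-1) → ℝ,
      k = Sum.elim (fun i => k (Sum.inl i)) (fun j => k (Sum.inr j)) :=
    fun k => funext fun x => by cases x <;> rfl
  -- the W block maps E-E into E-E
  have hWmaps : Set.MapsTo
      (fun x => (Matrix.of fun i j => T (Sum.inr i) (Sum.inr j)).mulVec x)
      (EmEℝ m) (EmEℝ m) := by
    intro v hv
    have hmem := hfwd _ (elim_mem_MsetR (0 : Fin d → ℤ) hv)
    have h2 := hmem.2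
    have heq : (fun j => T.mulVec (Sum.elim (fun i => (((0 : Fin d → ℤ) i) : ℝ)) v) (Sum.inr j))
        = (Matrix.of fun i j => T (Sum.inr i) (Sum.inr j)).mulVec v := by
      funext j
      rw [mulVec_elim_inr]
      simp [Matrix.mulVec, dotProduct]
    rwa [heq] at h2
  -- the W block is surjective on E-E
  have hWsurj : Set.SurjOn
      (fun x => (Matrix.of fun i j => T (Sum.inr i) (Sum.inr j)).mulVec x)
      (EmEℝ m) (EmEℝ m) := by
    intro u hu
    obtain ⟨k, hk, hTk⟩ := hbwd _ (elim_mem_MsetR (0 : Fin d → ℤ) hu)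
    refine ⟨fun j => k (Sum.inr j), hk.2, ?_⟩
    funext j
    have h1 : T.mulVec k (Sum.inr j) = u j := by
      rw [hTk]; rfl
    rw [hkelim k, mulVec_elim_inr] at h1
    simp only [hX, zero_mul, Finset.sum_const_zero, zero_add] at h1
    simpa [Matrix.mulVec, dotProduct] using h1
  have hWbij := ((EmE_finite m).surjOn_iff_bijOn_of_mapsTo hWmaps).mp hWsurj
  have hWinj0 : ∀ v ∈ EmEℝ m,
      (Matrix.of fun i j => T (Sum.inr i) (Sum.inr j)).mulVec v = 0 → v = 0 := by
    intro v hv h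
    exact hWbij.injOn hv (zero_mem_EmE m) (by simpa [Matrix.mulVec_zero] using h)
  -- integer entries of the U block
  have hint : ∀ i j, ∃ z : ℤ, T (Sum.inl i) (Sum.inl j) = (z : ℝ) := by
    intro i j
    have hmem := hfwd _ (elim_mem_MsetR (Pi.single j (1:ℤ)) (zero_mem_EmE m))
    obtain ⟨z, hz⟩ := hmem.1 i
    refine ⟨z, ?_⟩
    rw [mulVec_elim_inl] at hz
    simpa [Pi.single_apply] using hz
  set U : Matrix (Fin d) (Fin d) ℤ := Matrix.of fun i j => (hint i j).choose with hUdef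
  have hU : ∀ i j, T (Sum.inl i) (Sum.inl j) = (U i j : ℝ) := fun i j => (hint i j).choose_spec
  -- U is surjective on ℤ^d
  have hUsurj : ∀ w : Fin d → ℤ, ∃ z : Fin d → ℤ, ∀ i, ∑ l, U i l * z l = w i := by
    intro w
    obtain ⟨k, hk, hTk⟩ := hbwd _ (elim_mem_MsetR w (zero_mem_EmE m))
    obtain ⟨z, hz⟩ := Classical.axiomOfChoice hk.1
    -- the inr part of k is zero
    have hv0 : (fun j => k (Sum.inr j)) = 0 := by
      apply hWinj0 _ hk.2
      funext j
      have h1 : T.mulVec k (Sum.inr j) = 0 := by rw [hTk]; rfl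
      rw [hkelim k, mulVec_elim_inr] at h1
      simp only [hX, zero_mul, Finset.sum_const_zero, zero_add] at h1
      simpa [Matrix.mulVec, dotProduct] using h1
    refine ⟨z, fun i => ?_⟩
    have h1 : T.mulVec k (Sum.inl i) = (w i : ℝ) := by rw [hTk]; rfl
    rw [hkelim k, mulVec_elim_inl] at h1
    have h2 : ∀ j, k (Sum.inr j) = 0 := fun j => congrFun hv0 j
    simp only [h2, mul_zero, Finset.sum_const_zero, add_zero] at h1
    have h3 : ((∑ l, U i l * z l : ℤ) : ℝ) = ((w i : ℤ) : ℝ) := by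
      push_cast
      rw [← h1]
      exact Finset.sum_congr rfl fun l _ => by rw [hU i l, hz l]
    exact_mod_cast h3
  -- build a right inverse of U over ℤ
  have hUunit : IsUnit U.det := by
    set U' : Matrix (Fin d) (Fin d) ℤ :=
      Matrix.of fun l j => (hUsurj (Pi.single j 1)).choose l with hU'def
    have hUU' : U * U' = 1 := by
      ext i j
      rw [Matrix.mul_apply, Matrix.one_apply]
      have := (hUsurj (Pi.single j 1)).choose_spec i
      rw [Pi.single_apply] at this
      simpa [hU'def] using this
    have := congrArg Matrix.det hUU'
    rw [Matrix.det_mul, Matrix.det_one] at this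
    exact IsUnit.of_mul_eq_one _ this
  exact ⟨hX, ⟨U, hUunit, hU⟩, hWbij⟩
end

section
/- Conversely, if U ∈ GL_d(ℤ), V is any d×(m−1) integer matrix, and W is a linear map of ℝ^{m−1} permuting the set E (extended affinely so that W maps E−E bijectively to E−E), then the block matrix T = [[U, V],[0, W]] satisfies T(M) = M where M = ℤ^d × (E−E). -/
open Matrix

/-- Any element of `E−E` is the coordinatewise cast of an integer vector. -/
lemma EmE_int {m : ℕ} {x : Fin (m - 1) → ℝ} (hx : x ∈ EmEℝ m) :
    ∃ z : Fin (m - 1) → ℤ, x = fun j => ((z j : ℤ) : ℝ) := by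
  obtain ⟨a, _, b, _, rfl⟩ := hx
  exact ⟨fun j => a j - b j, by push_cast; rfl⟩

/-- Casting commutes with `mulVec`. -/
lemma cast_mulVec {p q : ℕ} (A : Matrix (Fin p) (Fin q) ℤ) (v : Fin q → ℤ) (i : Fin p) :
    ((A.map (Int.cast : ℤ → ℝ)) *ᵥ fun j => ((v j : ℤ) : ℝ)) i = (((A *ᵥ v) i : ℤ) : ℝ) := by
  simp [Matrix.mulVec, dotProduct, Matrix.map_apply]

/-- conversely, if `U ∈ GL_d(ℤ)`, `V` is an integer matrix, and the
linear map `W` maps `E−E` bijectively onto itself, then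
`T = [[U, V],[0, W]]` satisfies `T(M) = M`. -/
theorem stmt_4 (d m : ℕ) (U : Matrix (Fin d) (Fin d) ℤ) (hU : IsUnit U.det)
    (V : Matrix (Fin d) (Fin (m - 1)) ℤ)
    (W : Matrix (Fin (m - 1)) (Fin (m - 1)) ℝ)
    (hW : Set.BijOn (fun x => W.mulVec x) (EmEℝ m) (EmEℝ m)) :
    (fun k => (Matrix.fromBlocks (U.map (Int.cast : ℤ → ℝ)) (V.map (Int.cast : ℤ → ℝ))
        (0 : Matrix (Fin (m - 1)) (Fin d) ℝ) W).mulVec k) '' MsetR d m = MsetR d m := by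
  ext y
  constructor
  · rintro ⟨p, ⟨hp1, hp2⟩, rfl⟩
    choose z hz using hp1
    obtain ⟨w, hw⟩ := EmE_int hp2
    have hpe : p = Sum.elim (fun i => ((z i : ℤ) : ℝ)) (fun j => ((w j : ℤ) : ℝ)) := by
      funext x
      cases x with
      | inl i => exact hz i
      | inr j => exact congrFun hw j
    show (Matrix.fromBlocks (U.map (Int.cast : ℤ → ℝ)) (V.map (Int.cast : ℤ → ℝ))
        (0 : Matrix (Fin (m - 1)) (Fin d) ℝ) W).mulVec p ∈ MsetR d m
    rw [hpe, Matrix.fromBlocks_mulVec]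
    constructor
    · intro i
      refine ⟨U.mulVec z i + V.mulVec w i, ?_⟩
      simp only [Sum.elim_comp_inl, Sum.elim_comp_inr, Sum.elim_inl, Pi.add_apply, cast_mulVec]
      push_cast
      ring
    · have heq : (fun j => Sum.elim ((U.map (Int.cast : ℤ → ℝ)).mulVec (fun i => ((z i : ℤ) : ℝ))
          + (V.map (Int.cast : ℤ → ℝ)).mulVec (fun j => ((w j : ℤ) : ℝ)))
          ((0 : Matrix (Fin (m - 1)) (Fin d) ℝ).mulVec (fun i => ((z i : ℤ) : ℝ))
          + W.mulVec (fun j => ((w j : ℤ) : ℝ))) (Sum.inr j))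
          = W.mulVec (fun j => ((w j : ℤ) : ℝ)) := by
        funext j; simp
      simp only [Sum.elim_comp_inl, Sum.elim_comp_inr]
      rw [heq]
      have := hW.mapsTo hp2
      rwa [hw] at this
  · rintro ⟨hy1, hy2⟩
    choose zf hzf using hy1
    obtain ⟨x₂, hx₂mem, hx₂⟩ := hW.surjOn hy2
    obtain ⟨w, hw⟩ := EmE_int hx₂mem
    set c : Fin d → ℤ := V.mulVec w with hc
    set x₁ : Fin d → ℤ := U⁻¹.mulVec (zf - c) with hx₁
    have hUx₁ : U.mulVec x₁ = zf - c := by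
      rw [hx₁, Matrix.mulVec_mulVec, Matrix.mul_nonsing_inv U hU, Matrix.one_mulVec]
    refine ⟨Sum.elim (fun i => ((x₁ i : ℤ) : ℝ)) (fun j => ((w j : ℤ) : ℝ)),
      ⟨fun i => ⟨x₁ i, rfl⟩, by rw [← hw] at *; exact hx₂mem⟩, ?_⟩
    show (Matrix.fromBlocks (U.map (Int.cast : ℤ → ℝ)) (V.map (Int.cast : ℤ → ℝ))
        (0 : Matrix (Fin (m - 1)) (Fin d) ℝ) W).mulVec _ = y
    rw [Matrix.fromBlocks_mulVec]
    funext x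
    cases x with
    | inl i =>
      simp only [Sum.elim_comp_inl, Sum.elim_comp_inr, Sum.elim_inl, Pi.add_apply, cast_mulVec]
      rw [hUx₁, hzf i, hc]
      simp only [Pi.sub_apply]
      push_cast
      ring
    | inr j =>
      simp only [Sum.elim_comp_inl, Sum.elim_comp_inr, Sum.elim_inr, Pi.add_apply,
        Matrix.zero_mulVec, Pi.zero_apply, zero_add]
      rw [← hw]
      exact congrFun hx₂ j
end

section
/- Let D₉ and c = (1/2,…,1/2) be as above. For every t in some open neighborhood of c, the 2-periodic set Ξ(t) = D₉ ∪ (D₉ + t) has packing radius 1/√2, i.e., every pair of distinct points of Ξ(t) is at distance at least √2, with equality attained. -/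
/-- The lattice `D₉` as a set of points of `ℝ⁹`. -/
def D9 : Set (EuclideanSpace ℝ (Fin 9)) :=
  {x | ∃ n : Fin 9 → ℤ, Even (∑ i, n i) ∧ ∀ i, x i = (n i : ℝ)}

/-- The 2-periodic set `Ξ(t) = D₉ ∪ (D₉ + t)`. -/
def Xi (t : EuclideanSpace ℝ (Fin 9)) : Set (EuclideanSpace ℝ (Fin 9)) :=
  D9 ∪ (fun x => x + t) '' D9

/-- The deep hole `c = (1/2,…,1/2)`. -/
noncomputable def cHole : EuclideanSpace ℝ (Fin 9) := WithLp.toLp 2 (fun _ => 1 / 2)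

lemma d9_sub {x y : EuclideanSpace ℝ (Fin 9)} (hx : x ∈ D9) (hy : y ∈ D9) :
    x - y ∈ D9 := by
  obtain ⟨n, hn, hxn⟩ := hx
  obtain ⟨m, hm, hym⟩ := hy
  refine ⟨n - m, ?_, fun i => ?_⟩
  · simpa [Finset.sum_sub_distrib] using hn.sub hm
  · show x i - y i = _
    rw [hxn i, hym i]
    simp only [Pi.sub_apply]
    push_cast
    ring

lemma key_int (k : Fin 9 → ℤ) (he : Even (∑ i, k i)) (hk : k ≠ 0) :
    2 ≤ ∑ i, (k i) ^ 2 := by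
  have hpar : Even (∑ i, (k i) ^ 2) := by
    have h1 : Even (∑ i, ((k i) ^ 2 - k i)) := by
      apply Finset.even_sum
      intro i _
      have : (k i) ^ 2 - k i = (k i - 1) * k i := by ring
      rw [this]
      rcases Int.even_or_odd (k i) with h | h
      · exact h.mul_left _
      · exact (Int.even_sub_one.mpr (Int.not_even_iff_odd.mpr h)).mul_right _
    have h2 : ∑ i, ((k i) ^ 2 - k i) = ∑ i, (k i) ^ 2 - ∑ i, k i := by
      rw [Finset.sum_sub_distrib]
    rw [h2] at h1
    have := h1.add he
    simpa using this
  obtain ⟨i, hi⟩ := Function.ne_iff.mp hk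
  have hi' : k i ≠ 0 := hi
  have h1 : 1 ≤ (k i) ^ 2 := by
    have : 0 < (k i) ^ 2 := pow_pos (abs_pos.mpr hi') 2 |>.trans_le (by rw [sq_abs])
    omega
  have hle : (k i) ^ 2 ≤ ∑ j, (k j) ^ 2 :=
    Finset.single_le_sum (fun j _ => sq_nonneg (k j)) (Finset.mem_univ i)
  obtain ⟨j, hj⟩ := hpar
  omega

lemma d9_dist {x y : EuclideanSpace ℝ (Fin 9)} (hx : x ∈ D9) (hy : y ∈ D9)
    (hne : x ≠ y) : Real.sqrt 2 ≤ dist x y := by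
  obtain ⟨n, hn, hxn⟩ := hx
  obtain ⟨m, hm, hym⟩ := hy
  have hk : n - m ≠ 0 := by
    intro h
    apply hne
    ext i
    have : n i - m i = 0 := congrFun h i
    have : (n i : ℝ) = m i := by exact_mod_cast sub_eq_zero.mp this
    rw [hxn i, hym i, this]
  have hkey : 2 ≤ ∑ i, (n i - m i) ^ 2 := by
    apply key_int _ _ hk
    simpa [Finset.sum_sub_distrib] using hn.sub hm
  rw [EuclideanSpace.dist_eq]
  apply Real.sqrt_le_sqrt
  have : ∀ i, dist (x i) (y i) ^ 2 = ((n i - m i : ℤ) : ℝ) ^ 2 := by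
    intro i
    rw [Real.dist_eq, sq_abs, hxn i, hym i]
    push_cast; ring
  rw [Finset.sum_congr rfl fun i _ => this i]
  calc (2 : ℝ) = ((2 : ℤ) : ℝ) := by norm_num
    _ ≤ ((∑ i, (n i - m i) ^ 2 : ℤ) : ℝ) := by exact_mod_cast hkey
    _ = ∑ i, ((n i - m i : ℤ) : ℝ) ^ 2 := by push_cast; ring

lemma hole_dist {x : EuclideanSpace ℝ (Fin 9)} (hx : x ∈ D9) :
    (3 / 2 : ℝ) ≤ dist cHole x := by
  obtain ⟨n, _, hxn⟩ := hx
  rw [EuclideanSpace.dist_eq]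
  have hterm : ∀ i : Fin 9, (1 / 4 : ℝ) ≤ dist (cHole i) (x i) ^ 2 := by
    intro i
    rw [Real.dist_eq, sq_abs, hxn i]
    show (1/4 : ℝ) ≤ (1/2 - (n i : ℝ)) ^ 2
    rcases le_or_gt (n i) 0 with h | h
    · have : (n i : ℝ) ≤ 0 := by exact_mod_cast h
      nlinarith
    · have : (1 : ℝ) ≤ (n i : ℝ) := by exact_mod_cast h
      nlinarith
  have hsum : (9 / 4 : ℝ) ≤ ∑ i, dist (cHole i) (x i) ^ 2 := by
    calc (9 / 4 : ℝ) = ∑ _i : Fin 9, (1 / 4 : ℝ) := by simp; norm_num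
      _ ≤ _ := Finset.sum_le_sum fun i _ => hterm i
  calc (3 / 2 : ℝ) = Real.sqrt (9 / 4) := by
        rw [show (9 / 4 : ℝ) = (3 / 2) ^ 2 by norm_num, Real.sqrt_sq (by norm_num)]
    _ ≤ _ := Real.sqrt_le_sqrt hsum

lemma mixed_dist {t x : EuclideanSpace ℝ (Fin 9)} (hx : x ∈ D9)
    (ht : dist t cHole < 1 / 15) : Real.sqrt 2 ≤ dist x t := by
  have h1 : (3 / 2 : ℝ) ≤ dist cHole x := hole_dist hx
  have h2 : dist cHole x ≤ dist cHole t + dist t x := dist_triangle _ _ _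
  have h3 : dist cHole t < 1 / 15 := by rwa [dist_comm]
  have h4 : (43 / 30 : ℝ) ≤ dist x t := by rw [dist_comm]; linarith
  calc Real.sqrt 2 ≤ 43 / 30 := by
        have h5 : Real.sqrt 2 ≤ Real.sqrt ((43 / 30) ^ 2) :=
          Real.sqrt_le_sqrt (by norm_num)
        rwa [Real.sqrt_sq (by norm_num)] at h5
    _ ≤ dist x t := h4

/-- for all `t` in some open neighborhood of `c`, the 2-periodic
set `Ξ(t) = D₉ ∪ (D₉ + t)` has packing radius `1/√2`: distinct points are at
distance at least `√2`, with equality attained. -/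
theorem stmt_10 :
    ∃ ε > (0 : ℝ), ∀ t : EuclideanSpace ℝ (Fin 9), dist t cHole < ε →
      (∀ x ∈ Xi t, ∀ y ∈ Xi t, x ≠ y → Real.sqrt 2 ≤ dist x y) ∧
      (∃ x ∈ Xi t, ∃ y ∈ Xi t, x ≠ y ∧ dist x y = Real.sqrt 2) := by
  refine ⟨1 / 15, by norm_num, fun t ht => ⟨?_, ?_⟩⟩
  · rintro x hx y hy hne
    rcases hx with hx | ⟨a, ha, rfl⟩ <;> rcases hy with hy | ⟨b, hb, rfl⟩
    · exact d9_dist hx hy hne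
    · -- x ∈ D9, y = b + t
      have hd : x - b ∈ D9 := d9_sub hx hb
      have : dist x (b + t) = dist (x - b) t := by
        rw [dist_eq_norm, dist_eq_norm]; congr 1; abel
      rw [this]
      exact mixed_dist hd ht
    · -- x = a + t, y ∈ D9
      have hd : y - a ∈ D9 := d9_sub hy ha
      rw [dist_comm]
      have : dist y ((fun x => x + t) a) = dist (y - a) t := by
        rw [dist_eq_norm, dist_eq_norm]; congr 1; dsimp only; abel
      rw [this]
      exact mixed_dist hd ht
    · have : dist ((fun x => x + t) a) ((fun x => x + t) b) = dist a b := by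
        simp [dist_eq_norm]
      rw [this]
      exact d9_dist ha hb (fun h => hne (by simp [h]))
  · -- equality witnesses
    refine ⟨0, Or.inl ⟨0, by simp, fun i => by simp⟩,
      WithLp.toLp 2 (fun i : Fin 9 => if i.val < 2 then (1:ℝ) else 0), Or.inl ⟨fun i => if i.val < 2 then 1 else 0, ?_, fun i => ?_⟩, ?_, ?_⟩
    · show Even (∑ i : Fin 9, if i.val < 2 then (1:ℤ) else 0)
      decide
    · by_cases h : (i : ℕ) < 2 <;> simp [h]
    · intro h
      have := congrArg (fun v : EuclideanSpace ℝ (Fin 9) => v 0) h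
      simp at this
    · rw [EuclideanSpace.dist_eq]
      congr 1
      show (∑ i : Fin 9, dist ((0 : EuclideanSpace ℝ (Fin 9)) i) _ ^ 2) = 2
      simp only [Real.dist_eq, sq_abs]
      rw [Fin.sum_univ_succ, Fin.sum_univ_succ, Fin.sum_univ_succ, Fin.sum_univ_succ,
        Fin.sum_univ_succ, Fin.sum_univ_succ, Fin.sum_univ_succ, Fin.sum_univ_succ]
      norm_num
end

section
/- Let Q' be a positive semidefinite rational symmetric d×d matrix with nontrivial null space N(Q'), R' a (m−1)×d matrix, and suppose there exist u ∈ N(Q') and l ∈ E−E with c := uᵀ(R')ᵀl > 0. Then inf over k ∈ M of kᵀJ'k = −∞, where J' has blocks Q', R', S'. Specifically, taking integer vectors [v](t) closest to (−tcu, l), the value J'([v](t)) → −∞ as t → ∞. -/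
open Matrix

/-- `E − E`, the set of differences of elements of `E`. -/
def EmE (m : ℕ) : Set (Fin (m - 1) → ℤ) :=
  {x | ∃ a ∈ Eset m, ∃ b ∈ Eset m, x = a - b}

/-- The integer vectors `M = ℤ^d × (E−E)`. -/
def Mset (d m : ℕ) : Set ((Fin d → ℤ) × (Fin (m - 1) → ℤ)) :=
  {k | k.2 ∈ EmE m}

/-- The real vector in `ℝ^{d+m-1}` corresponding to `k ∈ M`. -/
def toR (d m : ℕ) (k : (Fin d → ℤ) × (Fin (m - 1) → ℤ)) :
    Fin d ⊕ Fin (m - 1) → ℝ :=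
  Sum.elim (fun i => (k.1 i : ℝ)) (fun j => (k.2 j : ℝ))

/-- if `Q'` is positive semidefinite, rational and singular, and
some `u ∈ N(Q')` and `l ∈ E−E` satisfy `c = uᵀ(R')ᵀl > 0`, then the quadratic
form `J' = [[Q', R'ᵀ],[R', S']]` is unbounded below on `M`:
`inf_{k ∈ M} kᵀJ'k = −∞`. -/
theorem stmt_17 (d m : ℕ) (Q' : Matrix (Fin d) (Fin d) ℝ)
    (R' : Matrix (Fin (m - 1)) (Fin d) ℝ)
    (S' : Matrix (Fin (m - 1)) (Fin (m - 1)) ℝ)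
    (hQsymm : Q'.IsSymm) (hQpsd : Q'.PosSemidef)
    (hQrat : ∀ i j, ∃ q : ℚ, Q' i j = (q : ℝ))
    (u : Fin d → ℝ) (hu : Q'.mulVec u = 0) (hu0 : u ≠ 0)
    (l : Fin (m - 1) → ℤ) (hl : l ∈ EmE m)
    (hc : 0 < (fun j => (l j : ℝ)) ⬝ᵥ R'.mulVec u) :
    ∀ B : ℝ, ∃ k ∈ Mset d m,
      toR d m k ⬝ᵥ (Matrix.fromBlocks Q' R'ᵀ R' S').mulVec (toR d m k) < B := by
  intro B
  set L : Fin (m - 1) → ℝ := fun j => (l j : ℝ) with hLdef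
  set c : ℝ := L ⬝ᵥ R'.mulVec u with hcdef
  have hc' : 0 < c := hc
  set C1 : ℝ := ∑ i, ∑ j, |Q' i j| * (1/4) with hC1
  set C2 : ℝ := ∑ j, ∑ i, |L j| * |R' j i| * (1/2) with hC2
  set D : ℝ := L ⬝ᵥ S'.mulVec L with hD
  obtain ⟨t, ht⟩ : ∃ t : ℝ, C1 + 2*C2 + D - 2*t*c < B := by
    refine ⟨(C1 + 2*C2 + D - B)/(2*c) + 1, ?_⟩
    have h2c : (0:ℝ) < 2*c := by linarith
    have := mul_pos h2c (by norm_num : (0:ℝ) < 1)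
    have hdiv : ((C1 + 2*C2 + D - B)/(2*c)) * (2*c) = C1 + 2*C2 + D - B :=
      div_mul_cancel₀ _ (ne_of_gt h2c)
    nlinarith [hdiv]
  refine ⟨(fun i => round (-(t * u i)), l), hl, ?_⟩
  set x : Fin d → ℝ := fun i => ((round (-(t * u i)) : ℤ) : ℝ) with hxdef
  set e : Fin d → ℝ := fun i => x i + t * u i with hedef
  have hxe : x = e - t • u := by
    funext i
    simp only [hedef, Pi.sub_apply, Pi.smul_apply, smul_eq_mul]
    ring
  have he : ∀ i, |e i| ≤ 1/2 := by
    intro i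
    have := abs_sub_round (-(t * u i))
    rw [abs_sub_comm] at this
    simpa [hedef, sub_eq_add_neg, add_comm] using this
  have hQe : Q' *ᵥ x = Q' *ᵥ e := by
    rw [hxe, Matrix.mulVec_sub, Matrix.mulVec_smul, hu]
    simp
  have huQ : u ᵥ* Q' = 0 := by
    rw [← Matrix.mulVec_transpose, hQsymm.eq, hu]
  have hxQx : x ⬝ᵥ Q' *ᵥ x = e ⬝ᵥ Q' *ᵥ e := by
    rw [hQe, hxe, sub_dotProduct, smul_dotProduct,
      Matrix.dotProduct_mulVec u, huQ]
    simp
  have hRx : R' *ᵥ x = R' *ᵥ e - t • (R' *ᵥ u) := by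
    rw [hxe, Matrix.mulVec_sub, Matrix.mulVec_smul]
  have hLRx : L ⬝ᵥ R' *ᵥ x = L ⬝ᵥ R' *ᵥ e - t * c := by
    rw [hRx, dotProduct_sub, dotProduct_smul, hcdef, smul_eq_mul]
  have hxRL : x ⬝ᵥ R'ᵀ *ᵥ L = L ⬝ᵥ R' *ᵥ x := by
    rw [Matrix.dotProduct_mulVec, ← Matrix.mulVec_transpose, Matrix.transpose_transpose,
      dotProduct_comm]
  have htoR : toR d m (fun i => round (-(t * u i)), l) = Sum.elim x L := rfl
  have hval : toR d m (fun i => round (-(t * u i)), l) ⬝ᵥ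
      (Matrix.fromBlocks Q' R'ᵀ R' S').mulVec (toR d m (fun i => round (-(t * u i)), l))
      = e ⬝ᵥ Q' *ᵥ e + 2 * (L ⬝ᵥ R' *ᵥ e) - 2 * t * c + D := by
    rw [htoR, Matrix.fromBlocks_mulVec, sumElim_dotProduct_sumElim]
    simp only [Sum.elim_comp_inl, Sum.elim_comp_inr, dotProduct_add]
    rw [hxQx, hxRL, hLRx, hD]
    ring
  rw [hval]
  have hbound1 : e ⬝ᵥ Q' *ᵥ e ≤ C1 := by
    rw [hC1]
    simp only [dotProduct, Matrix.mulVec, Finset.mul_sum]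
    refine Finset.sum_le_sum fun i _ => Finset.sum_le_sum fun j _ => ?_
    calc e i * (Q' i j * e j) ≤ |e i * (Q' i j * e j)| := le_abs_self _
      _ = |e i| * |Q' i j| * |e j| := by rw [abs_mul, abs_mul]; ring
      _ ≤ (1/2) * |Q' i j| * |e j| :=
          mul_le_mul_of_nonneg_right
            (mul_le_mul_of_nonneg_right (he i) (abs_nonneg _)) (abs_nonneg _)
      _ ≤ (1/2) * |Q' i j| * (1/2) :=
          mul_le_mul_of_nonneg_left (he j) (by positivity)
      _ = |Q' i j| * (1/4) := by ring
  have hbound2 : L ⬝ᵥ R' *ᵥ e ≤ C2 := by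
    rw [hC2]
    simp only [dotProduct, Matrix.mulVec, Finset.mul_sum]
    refine Finset.sum_le_sum fun j _ => Finset.sum_le_sum fun i _ => ?_
    calc L j * (R' j i * e i) ≤ |L j * (R' j i * e i)| := le_abs_self _
      _ = |L j| * |R' j i| * |e i| := by rw [abs_mul, abs_mul]; ring
      _ ≤ |L j| * |R' j i| * (1/2) :=
          mul_le_mul_of_nonneg_left (he i) (by positivity)
  linarith
end
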